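/- Suppose P is V-uniformly ergodic, g ∈ L∞^V, and additionally g² ∈ L∞^V. Then the solution ĝ(z) := ∑_{n=0}^∞ (Pⁿ(g − π(g)))(z) of Poisson's equation satisfies ĝ² ∈ L∞^V, i.e. sup_{z ∈ Z} ĝ(z)²/V(z) < ∞. -/

import Mathlib

open MeasureTheory ProbabilityTheory Filter Matrix

noncomputable section

attribute [local instance] Matrix.normedAddCommGroup

/-- One-step transition operator of a Markov kernel acting on real-valued functions:
`(Pop P g)(z) = ∫ g(y) P(z, dy)`. -/
def Pop {Z : Type*} [MeasurableSpace Z] (P : Kernel Z Z) (g : Z → ℝ) (z : Z) : ℝ :=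
  ∫ y, g y ∂(P z)

/-- `n`-step transition operator `Pⁿ`. -/
def Pn {Z : Type*} [MeasurableSpace Z] (P : Kernel Z Z) : ℕ → (Z → ℝ) → Z → ℝ
  | 0 => fun g => g
  | n + 1 => fun g => Pop P (Pn P n g)

/-- `g ∈ L∞^V` : `|g|` is bounded by a constant multiple of `V`. -/
def BddV {Z : Type*} (V g : Z → ℝ) : Prop :=
  ∃ C : ℝ, ∀ z, |g z| ≤ C * V z

/-- `V`-uniform ergodicity of the kernel `P` with invariant probability measure `π`:
there are `ρ ∈ (0,1)` and `B < ∞` such that `|Pⁿg(z) − π(g)| ≤ B ‖g‖_V ρⁿ V(z)`. -/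
def VUniformlyErgodic {Z : Type*} [MeasurableSpace Z] (P : Kernel Z Z) (π : Measure Z)
    (V : Z → ℝ) : Prop :=
  ∃ ρ B : ℝ, ρ ∈ Set.Ioo (0 : ℝ) 1 ∧ 0 ≤ B ∧
    ∀ (g : Z → ℝ) (C : ℝ), Measurable g → (∀ z, |g z| ≤ C * V z) →
      ∀ (n : ℕ) (z : Z), |Pn P n g z - ∫ x, g x ∂π| ≤ B * C * ρ ^ n * V z

/-- Cross-moment matrix `E[X Yᵀ]`. -/
def crossMat {Ω : Type*} [MeasurableSpace Ω] (μ : Measure Ω) {d : ℕ}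
    (X Y : Ω → Fin d → ℝ) : Matrix (Fin d) (Fin d) ℝ :=
  Matrix.of fun i j => ∫ ω, X ω i * Y ω j ∂μ

/-- Covariance-type matrix `E[X Xᵀ]`. -/
def covMat {Ω : Type*} [MeasurableSpace Ω] (μ : Measure Ω) {d : ℕ}
    (X : Ω → Fin d → ℝ) : Matrix (Fin d) (Fin d) ℝ :=
  crossMat μ X X

/-- `∫∫ (g(z') − Pg(z)) (h(z') − Ph(z))ᵀ P(z, dz') π(dz)`. -/
def steadyCross {Z : Type*} [MeasurableSpace Z] (P : Kernel Z Z) (π : Measure Z) {d : ℕ}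
    (g h : Z → Fin d → ℝ) : Matrix (Fin d) (Fin d) ℝ :=
  Matrix.of fun i j =>
    ∫ z, ∫ z', (g z' i - Pop P (fun y => g y i) z) * (h z' j - Pop P (fun y => h y j) z)
      ∂(P z) ∂π

/-- The asymptotic covariance matrix
`Σ_Δ = ∫∫ (f̂(z') − Pf̂(z))(f̂(z') − Pf̂(z))ᵀ P(z, dz') π(dz)`. -/
def SigmaDelta {Z : Type*} [MeasurableSpace Z] (P : Kernel Z Z) (π : Measure Z) {d : ℕ}
    (fhat : Z → Fin d → ℝ) : Matrix (Fin d) (Fin d) ℝ :=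
  steadyCross P π fhat fhat

/-- `E_π[Δ^m Ẑᵀ] = ∫∫ (f̂(z') − Pf̂(z)) f̂̂(z')ᵀ P(z, dz') π(dz)`. -/
def martCrossZ {Z : Type*} [MeasurableSpace Z] (P : Kernel Z Z) (π : Measure Z) {d : ℕ}
    (fhat fhh : Z → Fin d → ℝ) : Matrix (Fin d) (Fin d) ℝ :=
  Matrix.of fun i j =>
    ∫ z, ∫ z', (fhat z' i - Pop P (fun y => fhat y i) z) * fhh z' j ∂(P z) ∂π

/-- All eigenvalues (over `ℂ`) of the real matrix `A` have real part `< c`. -/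
def EigReLT {d : ℕ} (A : Matrix (Fin d) (Fin d) ℝ) (c : ℝ) : Prop :=
  ∀ (l : ℂ) (v : Fin d → ℂ), v ≠ 0 → (A.map Complex.ofReal).mulVec v = l • v → l.re < c

/-- A real square matrix is Hurwitz if all of its eigenvalues have negative real part. -/
def IsHurwitz {d : ℕ} (A : Matrix (Fin d) (Fin d) ℝ) : Prop :=
  EigReLT A 0

section AuxLemmas

variable {Z : Type*} [MeasurableSpace Z] (P : Kernel Z Z) [IsMarkovKernel P]

lemma Pop_measurable {g : Z → ℝ} (hg : Measurable g) : Measurable (Pop P g) := by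
  have : StronglyMeasurable fun z => ∫ y, (fun p : Z × Z => g p.2) (z, y) ∂(P z) :=
    (hg.comp measurable_snd).stronglyMeasurable.integral_kernel_prod_right'
  exact this.measurable

lemma Pn_measurable {g : Z → ℝ} (hg : Measurable g) : ∀ n, Measurable (Pn P n g)
  | 0 => hg
  | n + 1 => Pop_measurable P (Pn_measurable hg n)

lemma jensen_sq {α : Type*} [MeasurableSpace α] {μ : Measure α} [IsProbabilityMeasure μ]
    {f : α → ℝ} (hf : Integrable f μ) (hf2 : Integrable (fun x => f x ^ 2) μ) :
    (∫ x, f x ∂μ) ^ 2 ≤ ∫ x, f x ^ 2 ∂μ := by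
  set m := ∫ x, f x ∂μ with hm
  have h0 : 0 ≤ ∫ x, (f x - m) ^ 2 ∂μ := integral_nonneg fun x => sq_nonneg _
  have hexp : ∀ x, (f x - m) ^ 2 = f x ^ 2 - (2 * m) * f x + m ^ 2 := by intro x; ring
  have h1 : ∫ x, (f x - m) ^ 2 ∂μ = ∫ x, f x ^ 2 ∂μ - (2*m) * m + m ^ 2 := by
    simp_rw [hexp]
    have hsub : Integrable (fun x => f x ^ 2 - 2 * m * f x) μ := hf2.sub (hf.const_mul _)
    rw [integral_add hsub (integrable_const _), integral_sub hf2 (hf.const_mul _),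
      MeasureTheory.integral_const_mul, integral_const]
    simp [← hm]
  nlinarith [h0, h1]

lemma V_integrable (π : Measure Z) {V : Z → ℝ} (hVmeas : Measurable V)
    (hV1 : ∀ z, 1 ≤ V z) {ρ B : ℝ} (hρ : ρ ∈ Set.Ioo (0:ℝ) 1) (hB : 0 ≤ B)
    (hE : ∀ (g : Z → ℝ) (C : ℝ), Measurable g → (∀ z, |g z| ≤ C * V z) →
      ∀ (n : ℕ) (z : Z), |Pn P n g z - ∫ x, g x ∂π| ≤ B * C * ρ ^ n * V z) (z : Z) :
    Integrable V (P z) := by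
  have hV0 : ∀ y, (0:ℝ) ≤ V y := fun y => le_trans zero_le_one (hV1 y)
  set G : ℕ → Z → ℝ := fun k y => min (V y) (k : ℝ) with hG
  have hGmeas : ∀ k, Measurable (G k) := fun k => hVmeas.min measurable_const
  have hG0 : ∀ k y, 0 ≤ G k y := fun k y => le_min (hV0 y) (Nat.cast_nonneg k)
  have hGbd : ∀ k y, |G k y| ≤ 1 * V y := by
    intro k y
    rw [abs_of_nonneg (hG0 k y), one_mul]
    exact min_le_left _ _
  have hGint : ∀ k, Integrable (G k) (P z) := by
    intro k
    refine (integrable_const (k:ℝ)).mono' (hGmeas k).aestronglyMeasurable ?_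
    refine ae_of_all _ fun y => ?_
    rw [Real.norm_eq_abs, abs_of_nonneg (hG0 k y)]
    exact min_le_right _ _
  have key : ∀ k, ∫ y, G k y ∂(P z) ≤ (1 + 2*B) * V z := by
    intro k
    have h1 := hE (G k) 1 (hGmeas k) (hGbd k) 1 z
    have h0 := hE (G k) 1 (hGmeas k) (hGbd k) 0 z
    have hPn1 : Pn P 1 (G k) z = ∫ y, G k y ∂(P z) := rfl
    rw [hPn1] at h1
    simp only [pow_zero, pow_one, Pn] at h0 h1
    have hGz : G k z ≤ V z := min_le_left _ _
    have hρ1 : ρ ≤ 1 := le_of_lt hρ.2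
    nlinarith [abs_le.1 h0, abs_le.1 h1, hV0 z, hρ.1]
  have hlin : ∫⁻ y, ENNReal.ofReal (V y) ∂(P z) ≤ ENNReal.ofReal ((1 + 2*B) * V z) := by
    have hsup : ∀ y, (⨆ k : ℕ, ENNReal.ofReal (G k y)) = ENNReal.ofReal (V y) := by
      intro y
      apply le_antisymm
      · exact iSup_le fun k => ENNReal.ofReal_le_ofReal (min_le_left _ _)
      · refine le_iSup_of_le ⌈V y⌉₊ ?_
        rw [hG]
        simp only
        rw [min_eq_left (Nat.le_ceil _)]
    calc ∫⁻ y, ENNReal.ofReal (V y) ∂(P z)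
        = ∫⁻ y, ⨆ k : ℕ, ENNReal.ofReal (G k y) ∂(P z) :=
          lintegral_congr fun y => (hsup y).symm
      _ = ⨆ k : ℕ, ∫⁻ y, ENNReal.ofReal (G k y) ∂(P z) := by
          refine lintegral_iSup (fun k => (hGmeas k).ennreal_ofReal) ?_
          intro k k' hkk' y
          exact ENNReal.ofReal_le_ofReal (min_le_min le_rfl (Nat.cast_le.2 hkk'))
      _ ≤ ENNReal.ofReal ((1 + 2*B) * V z) := by
          refine iSup_le fun k => ?_
          rw [← ofReal_integral_eq_lintegral_ofReal (hGint k) (ae_of_all _ (hG0 k))]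
          exact ENNReal.ofReal_le_ofReal (key k)
  refine ⟨hVmeas.aestronglyMeasurable, ?_⟩
  rw [hasFiniteIntegral_iff_ofReal (ae_of_all _ hV0)]
  exact lt_of_le_of_lt hlin ENNReal.ofReal_lt_top

lemma Pn_sq_le (π : Measure Z) [IsProbabilityMeasure π] {V : Z → ℝ} (hVmeas : Measurable V)
    (hV1 : ∀ z, 1 ≤ V z) {ρ B : ℝ} (hρ : ρ ∈ Set.Ioo (0:ℝ) 1) (hB : 0 ≤ B)
    (hE : ∀ (g : Z → ℝ) (C : ℝ), Measurable g → (∀ z, |g z| ≤ C * V z) →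
      ∀ (n : ℕ) (z : Z), |Pn P n g z - ∫ x, g x ∂π| ≤ B * C * ρ ^ n * V z)
    {f : Z → ℝ} (hf : Measurable f) {C1 C2 : ℝ} (hC1 : 0 ≤ C1) (hC2 : 0 ≤ C2)
    (h1 : ∀ y, |f y| ≤ C1 * V y) (h2 : ∀ y, |f y ^ 2| ≤ C2 * V y) :
    ∀ n z, (Pn P n f z) ^ 2 ≤ Pn P n (fun x => f x ^ 2) z := by
  intro n
  induction n with
  | zero => intro z; exact le_rfl
  | succ n IH =>
    intro z
    set fn := Pn P n f with hfn
    set Fn := Pn P n (fun x => f x ^ 2) with hFn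
    have hfnmeas : Measurable fn := Pn_measurable P hf n
    have hFnmeas : Measurable Fn := Pn_measurable P (hf.pow_const 2) n
    have hVint := V_integrable P π hVmeas hV1 hρ hB hE z
    have hρn : ρ ^ n ≤ 1 := pow_le_one₀ (le_of_lt hρ.1) (le_of_lt hρ.2)
    have hρn0 : (0:ℝ) ≤ ρ ^ n := pow_nonneg (le_of_lt hρ.1) n
    have hfnbd : ∀ y, |fn y| ≤ (B * C1 + |∫ x, f x ∂π|) * V y := by
      intro y
      have h := hE f C1 hf h1 n y
      rw [← hfn] at h
      have htri : |fn y| ≤ |fn y - ∫ x, f x ∂π| + |∫ x, f x ∂π| := by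
        have := abs_add_le (fn y - ∫ x, f x ∂π) (∫ x, f x ∂π); simpa using this
      have hVy := hV1 y
      have hbc : (0:ℝ) ≤ B * C1 := mul_nonneg hB hC1
      have k1 : B * C1 * ρ ^ n * V y ≤ B * C1 * V y := by
        have h2' : ρ ^ n * V y ≤ V y := by nlinarith
        calc B * C1 * ρ ^ n * V y = B * C1 * (ρ ^ n * V y) := by ring
          _ ≤ B * C1 * V y := mul_le_mul_of_nonneg_left h2' hbc
      have k2 : |∫ x, f x ∂π| ≤ |∫ x, f x ∂π| * V y :=
        le_mul_of_one_le_right (abs_nonneg _) hVy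
      nlinarith [k1, k2]
    have hFnbd : ∀ y, |Fn y| ≤ (B * C2 + |∫ x, f x ^ 2 ∂π|) * V y := by
      intro y
      have h := hE (fun x => f x ^ 2) C2 (hf.pow_const 2) h2 n y
      rw [← hFn] at h
      have htri : |Fn y| ≤ |Fn y - ∫ x, f x ^ 2 ∂π| + |∫ x, f x ^ 2 ∂π| := by
        have := abs_add_le (Fn y - ∫ x, f x ^ 2 ∂π) (∫ x, f x ^ 2 ∂π); simpa using this
      have hVy := hV1 y
      have hbc : (0:ℝ) ≤ B * C2 := mul_nonneg hB hC2
      have k1 : B * C2 * ρ ^ n * V y ≤ B * C2 * V y := by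
        have h2' : ρ ^ n * V y ≤ V y := by nlinarith
        calc B * C2 * ρ ^ n * V y = B * C2 * (ρ ^ n * V y) := by ring
          _ ≤ B * C2 * V y := mul_le_mul_of_nonneg_left h2' hbc
      have k2 : |∫ x, f x ^ 2 ∂π| ≤ |∫ x, f x ^ 2 ∂π| * V y :=
        le_mul_of_one_le_right (abs_nonneg _) hVy
      nlinarith [k1, k2]
    have hfint : Integrable fn (P z) := by
      refine (hVint.const_mul (B * C1 + |∫ x, f x ∂π|)).mono' hfnmeas.aestronglyMeasurable ?_
      exact ae_of_all _ fun y => by rw [Real.norm_eq_abs]; exact hfnbd y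
    have hFint : Integrable Fn (P z) := by
      refine (hVint.const_mul (B * C2 + |∫ x, f x ^ 2 ∂π|)).mono' hFnmeas.aestronglyMeasurable ?_
      exact ae_of_all _ fun y => by rw [Real.norm_eq_abs]; exact hFnbd y
    have hfn2int : Integrable (fun y => fn y ^ 2) (P z) := by
      refine (hVint.const_mul (B * C2 + |∫ x, f x ^ 2 ∂π|)).mono'
        ((hfnmeas.pow_const 2).aestronglyMeasurable) ?_
      refine ae_of_all _ fun y => ?_
      rw [Real.norm_eq_abs, abs_of_nonneg (sq_nonneg _)]
      exact le_trans (IH y) (le_trans (le_abs_self _) (hFnbd y))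
    have hstep : Pn P (n+1) f z = ∫ y, fn y ∂(P z) := rfl
    have hstep2 : Pn P (n+1) (fun x => f x ^ 2) z = ∫ y, Fn y ∂(P z) := rfl
    rw [hstep, hstep2]
    calc (∫ y, fn y ∂(P z)) ^ 2 ≤ ∫ y, fn y ^ 2 ∂(P z) := jensen_sq hfint hfn2int
      _ ≤ ∫ y, Fn y ∂(P z) := integral_mono hfn2int hFint fun y => IH y

end AuxLemmas

set_option maxHeartbeats 1000000 in
theorem stmt1
    {Z : Type*} [MeasurableSpace Z] (P : Kernel Z Z) [IsMarkovKernel P]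
    (π : Measure Z) [IsProbabilityMeasure π]
    (hinv : π.bind (fun z => P z) = π)
    (huniq : ∀ π' : Measure Z, IsProbabilityMeasure π' → π'.bind (fun z => P z) = π' → π' = π)
    (V : Z → ℝ) (hVmeas : Measurable V) (hV1 : ∀ z, 1 ≤ V z)
    (herg : VUniformlyErgodic P π V) (g : Z → ℝ) (hg : Measurable g) (hgV : BddV V g)
    (hg2V : BddV V fun z => g z ^ 2) :
    BddV V fun z => (∑' n : ℕ, Pn P n (fun x => g x - ∫ x', g x' ∂π) z) ^ 2 := by
  obtain ⟨ρ, B, hρ, hB, hE⟩ := herg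
  set c : ℝ := ∫ x', g x' ∂π with hc
  set gb : Z → ℝ := fun x => g x - c with hgb
  have hgbmeas : Measurable gb := hg.sub measurable_const
  have hgb0 : ∫ x, gb x ∂π = 0 := by
    by_cases hint : Integrable g π
    · rw [hgb]
      rw [integral_sub hint (integrable_const c)]
      simp [← hc]
    · have hc0 : c = 0 := by rw [hc]; exact integral_undef hint
      rw [hgb, hc0]
      simp only [sub_zero]
      rw [← hc, hc0]
  obtain ⟨Cg, hCg⟩ := hgV
  obtain ⟨Cg2, hCg2⟩ := hg2V
  have hV0 : ∀ y, (0:ℝ) < V y := fun y => lt_of_lt_of_le zero_lt_one (hV1 y)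
  set C1 : ℝ := max Cg 0 + |c| with hC1def
  have hC1 : 0 ≤ C1 := add_nonneg (le_max_right _ _) (abs_nonneg _)
  have h1 : ∀ y, |gb y| ≤ C1 * V y := by
    intro y
    have h := le_trans (hCg y) (mul_le_mul_of_nonneg_right (le_max_left Cg 0) (hV0 y).le)
    have htri : |gb y| ≤ |g y| + |c| := abs_sub (g y) c
    have hcV : |c| ≤ |c| * V y := le_mul_of_one_le_right (abs_nonneg _) (hV1 y)
    rw [hC1def]
    nlinarith [hV1 y]
  set C2 : ℝ := max Cg2 0 + 2 * |c| * max Cg 0 + c ^ 2 with hC2def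
  have hC2 : 0 ≤ C2 := by positivity
  have h2 : ∀ y, |gb y ^ 2| ≤ C2 * V y := by
    intro y
    have hgyV := le_trans (hCg y) (mul_le_mul_of_nonneg_right (le_max_left Cg 0) (hV0 y).le)
    have hgy2V := le_trans (hCg2 y) (mul_le_mul_of_nonneg_right (le_max_left Cg2 0) (hV0 y).le)
    have hVy := hV1 y
    have hexp : gb y ^ 2 = g y ^ 2 - 2 * c * g y + c ^ 2 := by rw [hgb]; ring
    have habs : |gb y ^ 2| ≤ |g y ^ 2| + 2 * |c| * |g y| + c ^ 2 := by
      rw [hexp]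
      calc |g y ^ 2 - 2 * c * g y + c ^ 2| ≤ |g y ^ 2 - 2 * c * g y| + |c ^ 2| := abs_add_le _ _
        _ ≤ |g y ^ 2| + |2 * c * g y| + |c ^ 2| := by linarith [abs_sub (g y ^ 2) (2 * c * g y)]
        _ = |g y ^ 2| + 2 * |c| * |g y| + c ^ 2 := by
            simp [abs_mul, abs_two, abs_pow, sq_abs]
    have hcc : 2 * |c| * |g y| ≤ 2 * |c| * (max Cg 0 * V y) :=
      mul_le_mul_of_nonneg_left hgyV (by positivity)
    have hc2 : c ^ 2 ≤ c ^ 2 * V y := le_mul_of_one_le_right (sq_nonneg c) hVy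
    rw [hC2def]
    nlinarith
  set a : ℝ := ∫ x, gb x ^ 2 ∂π with ha
  have ha0 : 0 ≤ a := integral_nonneg fun x => sq_nonneg _
  have hE1 : ∀ (n : ℕ) (z : Z), |Pn P n gb z| ≤ B * C1 * ρ ^ n * V z := by
    intro n z
    have h := hE gb C1 hgbmeas h1 n z
    rwa [hgb0, sub_zero] at h
  have hE2 : ∀ (n : ℕ) (z : Z), Pn P n (fun x => gb x ^ 2) z ≤ a + B * C2 * ρ ^ n * V z := by
    intro n z
    have h := hE (fun x => gb x ^ 2) C2 (hgbmeas.pow_const 2) h2 n z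
    rw [← ha] at h
    linarith [(abs_le.1 h).2]
  have hJ := Pn_sq_le P π hVmeas hV1 hρ hB hE hgbmeas hC1 hC2 h1 h2
  set r : ℝ := Real.sqrt ρ with hr
  have hr0 : 0 < r := Real.sqrt_pos.2 hρ.1
  have hr1 : r < 1 := by
    rw [hr, show (1:ℝ) = Real.sqrt 1 by simp]
    exact Real.sqrt_lt_sqrt hρ.1.le hρ.2
  have hsqrt_pow : ∀ n : ℕ, Real.sqrt (ρ ^ n) = r ^ n := by
    intro n
    induction n with
    | zero => simp
    | succ n IHn =>
      rw [pow_succ, Real.sqrt_mul (pow_nonneg hρ.1.le n), IHn, pow_succ, hr]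
  set sa : ℝ := Real.sqrt a with hsa
  set sb : ℝ := Real.sqrt (B * C2) with hsb
  have hbound2 : ∀ (n : ℕ) (z : Z),
      |Pn P n gb z| ≤ sa + sb * r ^ n * Real.sqrt (V z) := by
    intro n z
    have hle : (Pn P n gb z) ^ 2 ≤ a + B * C2 * ρ ^ n * V z := le_trans (hJ n z) (hE2 n z)
    have h1' := Real.abs_le_sqrt hle
    refine le_trans h1' ?_
    have hx0 : (0:ℝ) ≤ B * C2 * ρ ^ n * V z := by
      have := (hV0 z).le
      have := pow_nonneg hρ.1.le n
      positivity
    have hsplit : Real.sqrt (a + B * C2 * ρ ^ n * V z)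
        ≤ sa + Real.sqrt (B * C2 * ρ ^ n * V z) := by
      rw [Real.sqrt_le_left (add_nonneg (hsa ▸ Real.sqrt_nonneg a) (Real.sqrt_nonneg _))]
      have e1 := Real.sq_sqrt ha0
      have e2 := Real.sq_sqrt hx0
      nlinarith [Real.sqrt_nonneg a, Real.sqrt_nonneg (B * C2 * ρ ^ n * V z),
        mul_nonneg (Real.sqrt_nonneg a) (Real.sqrt_nonneg (B * C2 * ρ ^ n * V z))]
    refine le_trans hsplit ?_
    have heq : Real.sqrt (B * C2 * ρ ^ n * V z) = sb * r ^ n * Real.sqrt (V z) := by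
      rw [Real.sqrt_mul (mul_nonneg (mul_nonneg hB hC2) (pow_nonneg hρ.1.le n)), Real.sqrt_mul (mul_nonneg hB hC2), hsqrt_pow n, hsb]
    rw [heq]
  have hgeo : ∀ z, Summable fun n : ℕ => B * C1 * ρ ^ n * V z := fun z =>
    ((summable_geometric_of_lt_one hρ.1.le hρ.2).mul_left (B * C1)).mul_right (V z)
  have habs_sum : ∀ z, Summable fun n : ℕ => |Pn P n gb z| := fun z =>
    Summable.of_nonneg_of_le (fun n => abs_nonneg _) (fun n => hE1 n z) (hgeo z)
  set L : ℝ := -Real.log ρ with hL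
  have hL0 : 0 < L := by
    rw [hL]; linarith [Real.log_neg hρ.1 hρ.2]
  set K2 : ℝ := sb * (1 - r)⁻¹ + B * C1 * (1 - ρ)⁻¹ with hK2
  set K3 : ℝ := (2 / L + 1) * sa + K2 with hK3
  refine ⟨K3 ^ 2, fun z => ?_⟩
  set sV : ℝ := Real.sqrt (V z) with hsV
  have hsV1 : 1 ≤ sV := by
    rw [hsV, show (1:ℝ) = Real.sqrt 1 by simp]
    exact Real.sqrt_le_sqrt (hV1 z)
  set N : ℕ := ⌈Real.log (V z) / L⌉₊ with hN
  have hkey : ρ ^ N * V z ≤ 1 := by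
    have hlogV : 0 ≤ Real.log (V z) := Real.log_nonneg (hV1 z)
    have hNL : Real.log (V z) ≤ N * L := by
      have h := Nat.le_ceil (Real.log (V z) / L)
      rw [div_le_iff₀ hL0] at h
      exact_mod_cast h
    have hpos : 0 < ρ ^ N * V z := mul_pos (pow_pos hρ.1 N) (hV0 z)
    rw [← Real.log_nonpos_iff hpos.le, Real.log_mul (pow_pos hρ.1 N).ne' (hV0 z).ne', Real.log_pow]
    rw [hL] at hNL
    linarith
  have hNle : (N : ℝ) ≤ (2 / L + 1) * sV := by
    have hlogV : Real.log (V z) ≤ 2 * sV := by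
      have h1' : Real.log sV ≤ sV := by
        have := Real.log_le_sub_one_of_pos (lt_of_lt_of_le zero_lt_one hsV1)
        linarith
      have h2' : Real.log sV = Real.log (V z) / 2 := by rw [hsV]; exact Real.log_sqrt (hV0 z).le
      linarith
    have hceil : (N : ℝ) < Real.log (V z) / L + 1 := by
      rw [hN]
      exact Nat.ceil_lt_add_one (div_nonneg (Real.log_nonneg (hV1 z)) hL0.le)
    have hdiv : Real.log (V z) / L ≤ 2 * sV / L := by gcongr
    have he1 : 2 * sV / L = 2 / L * sV := by ring
    have he2 : (2 / L + 1) * sV = 2 / L * sV + sV := by ring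
    linarith
  -- envelope and summation
  set m : ℕ → ℝ := fun n => min (B * C1 * ρ ^ n * V z) (sa + sb * r ^ n * sV) with hm
  have hmle : ∀ n, |Pn P n gb z| ≤ m n := fun n => le_min (hE1 n z) (hbound2 n z)
  have hm0 : ∀ n, 0 ≤ m n := fun n => le_trans (abs_nonneg _) (hmle n)
  have hmsum : Summable m :=
    Summable.of_nonneg_of_le hm0 (fun n => min_le_left _ _) (hgeo z)
  have hS1 : |∑' n : ℕ, Pn P n gb z| ≤ ∑' n, m n := by
    have hn1 : |∑' n : ℕ, Pn P n gb z| ≤ ∑' n, |Pn P n gb z| := by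
      have h := norm_tsum_le_tsum_norm (f := fun n : ℕ => Pn P n gb z)
        (by simpa [Real.norm_eq_abs] using habs_sum z)
      simpa [Real.norm_eq_abs] using h
    exact le_trans hn1 (Summable.tsum_le_tsum hmle (habs_sum z) hmsum)
  have hsplit : ∑' n, m n = (∑ n ∈ Finset.range N, m n) + ∑' n, m (n + N) :=
    (Summable.sum_add_tsum_nat_add N hmsum).symm
  have hsbsV : (0:ℝ) ≤ sb * sV :=
    mul_nonneg (hsb ▸ Real.sqrt_nonneg _) (hsV ▸ Real.sqrt_nonneg _)
  have hhead : ∑ n ∈ Finset.range N, m n ≤ N * sa + sb * (1 - r)⁻¹ * sV := by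
    calc ∑ n ∈ Finset.range N, m n
        ≤ ∑ n ∈ Finset.range N, (sa + sb * r ^ n * sV) :=
          Finset.sum_le_sum fun n _ => min_le_right _ _
      _ = N * sa + (∑ n ∈ Finset.range N, r ^ n) * (sb * sV) := by
          rw [Finset.sum_add_distrib, Finset.sum_const, Finset.card_range, nsmul_eq_mul]
          congr 1
          rw [Finset.sum_mul]
          exact Finset.sum_congr rfl fun n _ => by ring
      _ ≤ N * sa + (1 - r)⁻¹ * (sb * sV) := by
          have hgs : ∑ n ∈ Finset.range N, r ^ n ≤ (1 - r)⁻¹ := by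
            have h := Summable.sum_le_tsum (Finset.range N)
              (fun i _ => pow_nonneg hr0.le i) (summable_geometric_of_lt_one hr0.le hr1)
            rwa [tsum_geometric_of_lt_one hr0.le hr1] at h
          nlinarith [hsbsV]
      _ = N * sa + sb * (1 - r)⁻¹ * sV := by ring
  have htail : ∑' n, m (n + N) ≤ B * C1 * (1 - ρ)⁻¹ := by
    have hle : ∀ n, m (n + N) ≤ B * C1 * ρ ^ N * V z * ρ ^ n := by
      intro n
      calc m (n + N) ≤ B * C1 * ρ ^ (n + N) * V z := min_le_left _ _
        _ = B * C1 * ρ ^ N * V z * ρ ^ n := by rw [pow_add]; ring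
    have hs2 : Summable fun n : ℕ => B * C1 * ρ ^ N * V z * ρ ^ n :=
      (summable_geometric_of_lt_one hρ.1.le hρ.2).mul_left _
    have hmsum' : Summable fun n => m (n + N) := (summable_nat_add_iff N).2 hmsum
    calc ∑' n, m (n + N) ≤ ∑' n : ℕ, B * C1 * ρ ^ N * V z * ρ ^ n :=
          Summable.tsum_le_tsum hle hmsum' hs2
      _ = B * C1 * ρ ^ N * V z * (1 - ρ)⁻¹ := by
          rw [tsum_mul_left, tsum_geometric_of_lt_one hρ.1.le hρ.2]
      _ ≤ B * C1 * (1 - ρ)⁻¹ := by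
          have h1ρ : (0:ℝ) < (1 - ρ)⁻¹ := inv_pos.2 (by linarith [hρ.2])
          have hbc : (0:ℝ) ≤ B * C1 := mul_nonneg hB hC1
          have hx : B * C1 * ρ ^ N * V z ≤ B * C1 := by
            calc B * C1 * ρ ^ N * V z = B * C1 * (ρ ^ N * V z) := by ring
              _ ≤ B * C1 * 1 := mul_le_mul_of_nonneg_left hkey hbc
              _ = B * C1 := mul_one _
          exact mul_le_mul_of_nonneg_right hx h1ρ.le
  have hsa0 : 0 ≤ sa := hsa ▸ Real.sqrt_nonneg _
  have hSbound : |∑' n : ℕ, Pn P n gb z| ≤ K3 * sV := by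
    have h0 : |∑' n : ℕ, Pn P n gb z| ≤ N * sa + sb * (1 - r)⁻¹ * sV + B * C1 * (1 - ρ)⁻¹ := by
      rw [hsplit] at hS1
      linarith
    have hNsa : (N:ℝ) * sa ≤ (2 / L + 1) * sa * sV := by
      calc (N:ℝ) * sa ≤ (2 / L + 1) * sV * sa := mul_le_mul_of_nonneg_right hNle hsa0
        _ = (2 / L + 1) * sa * sV := by ring
    have hconst : B * C1 * (1 - ρ)⁻¹ ≤ B * C1 * (1 - ρ)⁻¹ * sV := by
      have : (0:ℝ) ≤ B * C1 * (1 - ρ)⁻¹ :=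
        mul_nonneg (mul_nonneg hB hC1) (inv_nonneg.2 (by linarith [hρ.2]))
      exact le_mul_of_one_le_right this hsV1
    rw [hK3, hK2]
    nlinarith
  -- conclude
  rw [abs_of_nonneg (sq_nonneg _)]
  have hsq := mul_self_le_mul_self (abs_nonneg (∑' n : ℕ, Pn P n gb z)) hSbound
  have hVeq : sV * sV = V z := by
    rw [hsV]; exact Real.mul_self_sqrt (hV0 z).le
  have habs2 : |∑' n : ℕ, Pn P n gb z| * |∑' n : ℕ, Pn P n gb z|
      = (∑' n : ℕ, Pn P n gb z) ^ 2 := by rw [abs_mul_abs_self]; ring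
  calc (∑' n : ℕ, Pn P n gb z) ^ 2 = _ := habs2.symm
    _ ≤ K3 * sV * (K3 * sV) := hsq
    _ = K3 ^ 2 * (sV * sV) := by ring
    _ = K3 ^ 2 * V z := by rw [hVeq]
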